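/- Let B ≥ 1 and ω > 0, ω ≠ 1, and h(x) = Π_{i=0}^{2B−2}(x − ω^i). Then h has exactly 2B nonzero terms, i.e., h is a dense polynomial of degree 2B − 1 with no vanishing coefficient. -/
import Mathlib

open Polynomial Finset

lemma esymm_pos (s : Multiset ℝ) (hs : ∀ x ∈ s, 0 < x) {m : ℕ}
    (hm : m ≤ Multiset.card s) : 0 < s.esymm m := by
  unfold Multiset.esymm
  have hne : (s.powersetCard m) ≠ 0 := by
    rw [← Multiset.card_pos, Multiset.card_powersetCard]
    exact Nat.choose_pos hm
  have hmem : ∀ x ∈ (s.powersetCard m).map Multiset.prod, 0 < x := by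
    intro x hx
    simp only [Multiset.mem_map] at hx
    obtain ⟨t, ht, rfl⟩ := hx
    have hle := (Multiset.mem_powersetCard.mp ht).1
    exact Multiset.prod_pos fun y hy => hs y (Multiset.mem_of_le hle hy)
  set M := (s.powersetCard m).map Multiset.prod with hM
  have hMne : M ≠ 0 := by simpa [hM] using hne
  obtain ⟨a, haM⟩ := Multiset.exists_mem_of_ne_zero hMne
  obtain ⟨t, hat⟩ := Multiset.exists_cons_of_mem haM
  rw [hat, Multiset.sum_cons]
  have ha : 0 < a := hmem a (hat ▸ Multiset.mem_cons_self a t)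
  have ht : 0 ≤ t.sum := Multiset.sum_nonneg fun y hy =>
    (hmem y (hat ▸ Multiset.mem_cons_of_mem hy)).le
  linarith

/-- The polynomial `h = Π_{i=0}^{2B-2} (x - ω^i)` (`ω > 0`, `ω ≠ 1`) is dense: it
has exactly `2B` nonzero terms. -/
theorem stmt14 (B : ℕ) (hB : 1 ≤ B) (ω : ℝ) (hω : 0 < ω) (hω1 : ω ≠ 1)
    (h : ℝ[X]) (hh : h = ∏ i ∈ range (2 * B - 1), (X - C (ω ^ i))) :
    h.support.card = 2 * B := by
  set n := 2 * B - 1 with hn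
  have hn1 : n + 1 = 2 * B := by omega
  set s : Multiset ℝ := (range n).val.map (ω ^ ·) with hs
  have hcard : Multiset.card s = n := by simp [hs]
  have hsprod : h = (s.map fun t => X - C t).prod := by
    rw [hh, hs, Multiset.map_map]
    rfl
  have hpos : ∀ x ∈ s, 0 < x := by
    intro x hx
    simp only [hs, Multiset.mem_map] at hx
    obtain ⟨i, _, rfl⟩ := hx
    positivity
  have hcoeff : ∀ k ≤ n, h.coeff k ≠ 0 := by
    intro k hk
    rw [hsprod, Multiset.prod_X_sub_C_coeff s (hcard ▸ hk), hcard]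
    have := esymm_pos s hpos (m := n - k) (by omega)
    have h1 : ((-1 : ℝ)) ^ (n - k) ≠ 0 := by
      apply pow_ne_zero; norm_num
    exact mul_ne_zero h1 this.ne'
  have hdeg : h.natDegree = n := by
    rw [hsprod]
    simpa [hcard] using Multiset.natDegree_prod_X_sub_C s
  have : h.support = range (n + 1) := by
    ext k
    simp only [mem_support_iff, mem_range]
    constructor
    · intro hk
      by_contra hc
      exact hk (coeff_eq_zero_of_natDegree_lt (by omega))
    · intro hk; exact hcoeff k (by omega)
  rw [this, card_range, hn1]
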